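/- arXiv:2010.05100 — 3 statements merged into one kernel-verified Lean document; each statement's English description precedes it below -/
import Mathlib

section
/- The octonionic cotangent satisfies the duplication formula 128·cot(2z) = cot(z) + cot(z + π/2) for every z ∈ 𝕆 such that 2z + πm ≠ 0 for all m ∈ ℤ. -/
noncomputable section
open Real MeasureTheory

/-- The octonions `𝕆`, modeled as `ℝ⁸` with the Euclidean norm, endowed below with the
Cayley–Dickson (octonionic) multiplication. -/
abbrev O8 : Type := EuclideanSpace ℝ (Fin 8)

namespace Octo

/-- The standard basis units `e₀ = 1, e₁, …, e₇`. -/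
def ee : Fin 8 → O8 := fun i => EuclideanSpace.single i 1

/-- The octonionic multiplication table `(eᵢ · eⱼ)`, arising from the Cayley–Dickson doubling
of the quaternions (with `e₄ = e₁e₂`, `e₅ = e₁e₃`, `e₆ = e₂e₃`, `e₇ = (e₁e₂)e₃`). -/
def mulTable : Fin 8 → Fin 8 → O8 :=
  ![![ee 0, ee 1, ee 2, ee 3, ee 4, ee 5, ee 6, ee 7],
    ![ee 1, -ee 0, ee 4, ee 5, -ee 2, -ee 3, -ee 7, ee 6],
    ![ee 2, -ee 4, -ee 0, ee 6, ee 1, ee 7, -ee 3, -ee 5],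
    ![ee 3, -ee 5, -ee 6, -ee 0, -ee 7, ee 1, ee 2, ee 4],
    ![ee 4, ee 2, -ee 1, ee 7, -ee 0, -ee 6, ee 5, -ee 3],
    ![ee 5, ee 3, -ee 7, -ee 1, ee 6, -ee 0, -ee 4, ee 2],
    ![ee 6, ee 7, ee 3, -ee 2, -ee 5, ee 4, -ee 0, -ee 1],
    ![ee 7, -ee 6, ee 5, -ee 4, ee 3, -ee 2, ee 1, -ee 0]]

/-- Octonionic multiplication, extended bilinearly from the multiplication table. -/
instance : Mul O8 := ⟨fun x y => ∑ i : Fin 8, ∑ j : Fin 8, (x i * y j) • mulTable i j⟩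

instance : One O8 := ⟨ee 0⟩

/-- The real part `Re z = x₀` of an octonion. -/
def re (z : O8) : ℝ := z 0

/-- Octonionic conjugation `z̄ = x₀ - x₁e₁ - ⋯ - x₇e₇`. -/
def conj (z : O8) : O8 := (2 * z 0) • ee 0 - z

/-- The real number `r`, viewed as an octonion. -/
def ofReal (r : ℝ) : O8 := r • ee 0

/-- The octonionic Cauchy kernel `q₀(z) = z̄ / |z|⁸`. -/
def q0 (z : O8) : O8 := (‖z‖ ^ 8)⁻¹ • conj z

/-- `u / |u|⁸` (numerator not conjugated). -/
def pk (u : O8) : O8 := (‖u‖ ^ 8)⁻¹ • u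

/-- The octonionic Cauchy–Riemann operator `𝒟f = ∂f/∂x₀ + Σᵢ eᵢ ∂f/∂xᵢ`, applied from the left.
`f` is left 𝕆-regular on `U` if `Dl f z = 0` for all `z ∈ U`. -/
def Dl (f : O8 → O8) (z : O8) : O8 :=
  fderiv ℝ f z (ee 0) + ∑ i : Fin 7, ee i.succ * fderiv ℝ f z (ee i.succ)

/-- The octonionic Cauchy–Riemann operator applied from the right:
`f𝒟 = ∂f/∂x₀ + Σᵢ (∂f/∂xᵢ) eᵢ`. -/
def Dr (f : O8 → O8) (z : O8) : O8 :=
  fderiv ℝ f z (ee 0) + ∑ i : Fin 7, fderiv ℝ f z (ee i.succ) * ee i.succ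

/-- The singly-periodic octonionic monogenic cotangent
`cot z = Σ_{m ∈ ℤ} (z̄ + πm)/|z + πm|⁸`. -/
def octCot (z : O8) : O8 := ∑' m : ℤ, q0 (z + ofReal (π * m))

/-- The octonionic tangent `tan z = - cot (z + π/2)`. -/
def octTan (z : O8) : O8 := - octCot (z + ofReal (π / 2))

/-- The singly-periodic octonionic monogenic cosecant
`csc z = Σ_{n ∈ ℤ} (-1)ⁿ (z̄ + πn)/|z + πn|⁸`. -/
def octCsc (z : O8) : O8 := ∑' n : ℤ, ((-1 : ℝ) ^ n) • q0 (z + ofReal (π * n))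

end Octo


namespace Octo

lemma smul_apply (c : ℝ) (x : O8) (i : Fin 8) : (c • x) i = c * x i := rfl

lemma sub_apply (x y : O8) (i : Fin 8) : (x - y) i = x i - y i := rfl

lemma add_apply (x y : O8) (i : Fin 8) : (x + y) i = x i + y i := rfl

lemma ee_apply (i j : Fin 8) : ee i j = if j = i then 1 else 0 := by
  simp [ee, EuclideanSpace.single_apply]

lemma norm_ofReal (r : ℝ) : ‖ofReal r‖ = |r| := by
  rw [ofReal, norm_smul]
  simp [ee, Real.norm_eq_abs]

lemma ofReal_add (a b : ℝ) : ofReal (a + b) = ofReal a + ofReal b := by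
  simp [ofReal, add_smul]

lemma smul_ofReal (c r : ℝ) : c • ofReal r = ofReal (c * r) := by
  simp [ofReal, smul_smul]

lemma conj_smul (c : ℝ) (w : O8) : conj (c • w) = c • conj w := by
  rw [conj, conj, smul_sub, smul_smul, smul_apply]
  congr 2
  ring

lemma norm_conj (w : O8) : ‖conj w‖ = ‖w‖ := by
  rw [EuclideanSpace.norm_eq, EuclideanSpace.norm_eq]
  congr 1
  refine Finset.sum_congr rfl fun i _ => ?_
  rw [conj, sub_apply, smul_apply, ee_apply]
  rcases eq_or_ne i 0 with rfl | hi
  · have : 2 * w 0 * (if (0:Fin 8) = 0 then (1:ℝ) else 0) - w 0 = w 0 := by simp; ring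
    rw [this]
  · simp [hi, Real.norm_eq_abs, abs_neg]

lemma q0_two_smul (w : O8) : (128 : ℝ) • q0 ((2 : ℝ) • w) = q0 w := by
  rw [q0, q0, conj_smul, norm_smul, smul_smul, smul_smul]
  congr 1
  rw [mul_pow]
  have : ‖(2:ℝ)‖ ^ 8 = (256 : ℝ) := by norm_num [Real.norm_eq_abs]
  rw [this, mul_inv]
  ring

lemma norm_q0_le {w : O8} {c : ℝ} (hc : 0 < c) (hw : c ≤ ‖w‖) : ‖q0 w‖ ≤ (c ^ 7)⁻¹ := by
  have hw0 : (0:ℝ) < ‖w‖ := lt_of_lt_of_le hc hw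
  rw [q0, norm_smul, norm_conj]
  have h1 : ‖(‖w‖ ^ 8)⁻¹‖ = (‖w‖ ^ 8)⁻¹ := by
    rw [Real.norm_eq_abs, abs_of_nonneg]
    positivity
  rw [h1]
  have h2 : (‖w‖ ^ 8)⁻¹ * ‖w‖ = (‖w‖ ^ 7)⁻¹ := by
    field_simp
  rw [h2]
  gcongr

/-- The even integers, parametrized by `ℤ`. -/
def evenEquiv : ℤ ≃ {m : ℤ | Even m} where
  toFun k := ⟨2 * k, even_two_mul k⟩
  invFun x := x.1 / 2
  left_inv k := by show (2 * k : ℤ) / 2 = k; omega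
  right_inv := fun ⟨m, hm⟩ => by
    have hm' : m % 2 = 0 := Int.even_iff.mp hm
    exact Subtype.ext (by show 2 * (m / 2) = m; omega)

/-- The odd integers, parametrized by `ℤ`. -/
def oddEquiv : ℤ ≃ ({m : ℤ | Even m}ᶜ : Set ℤ) where
  toFun k := ⟨2 * k + 1, by
    simp only [Set.mem_compl_iff, Set.mem_setOf_eq, Int.even_iff]
    omega⟩
  invFun x := x.1 / 2
  left_inv k := by show (2 * k + 1 : ℤ) / 2 = k; omega
  right_inv := fun ⟨m, hm⟩ => by
    simp only [Set.mem_compl_iff, Set.mem_setOf_eq, Int.even_iff] at hm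
    have hm' : m % 2 = 1 := by omega
    exact Subtype.ext (by show 2 * (m / 2) + 1 = m; omega)

end Octo

/-- the octonionic cotangent duplication formula
`128 cot(2z) = cot z + cot (z + π/2)`. -/
theorem octCot_duplication (z : O8) (h : ∀ m : ℤ, (2 : ℝ) • z + Octo.ofReal (π * m) ≠ 0) :
    (128 : ℝ) • Octo.octCot ((2 : ℝ) • z) =
      Octo.octCot z + Octo.octCot (z + Octo.ofReal (π / 2)) := by
  classical
  set g : ℤ → O8 := fun m => Octo.q0 (z + Octo.ofReal (π * m / 2)) with hg
  have hpi : (0:ℝ) < π := Real.pi_pos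
  have key : ∀ m : ℤ, (2 : ℝ) • z + Octo.ofReal (π * m) =
      (2 : ℝ) • (z + Octo.ofReal (π * m / 2)) := by
    intro m
    rw [smul_add, Octo.smul_ofReal]
    congr 2
    ring
  -- the left-hand side equals ∑' g
  have hL : (128 : ℝ) • Octo.octCot ((2 : ℝ) • z) = ∑' m : ℤ, g m := by
    rw [Octo.octCot, ← tsum_const_smul'' (128 : ℝ)]
    exact tsum_congr fun m => by rw [key m, Octo.q0_two_smul]
  -- nonvanishing
  have hnz : ∀ m : ℤ, z + Octo.ofReal (π * m / 2) ≠ 0 := by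
    intro m hm
    exact h m (by rw [key m, hm, smul_zero])
  -- summability of g
  have hsum : Summable g := by
    obtain ⟨N, hN⟩ := exists_nat_ge (4 / π * (‖z‖ + 1))
    have hbase : Summable (fun m : ℤ => ((|(m : ℝ)|) ^ 7)⁻¹) := by
      have h7 : Summable (fun n : ℤ => 1 / (n : ℝ) ^ 7) :=
        summable_one_div_int_pow.mpr (by norm_num)
      refine h7.abs.congr fun m => ?_
      simp [abs_inv, abs_pow, one_div]
    refine Summable.of_norm_bounded_eventually
      (g := fun m : ℤ => ((4 / π) ^ 7) * ((|(m : ℝ)|) ^ 7)⁻¹) (hbase.mul_left _) ?_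
    rw [Filter.eventually_cofinite]
    refine Set.Finite.subset (Set.finite_Icc (-(N : ℤ)) (N : ℤ)) ?_
    intro m hm
    simp only [Set.mem_setOf_eq, not_le] at hm
    by_contra hmem
    simp only [Set.mem_Icc, not_and_or, not_le] at hmem
    -- from m outside [-N, N] we derive the norm bound, contradiction
    have habs : (N : ℝ) ≤ |(m : ℝ)| := by
      have h0 : (N : ℤ) ≤ |m| := by
        rw [Int.abs_eq_natAbs]
        omega
      exact_mod_cast h0
    have hc : ‖z‖ + 1 ≤ π / 4 * |(m : ℝ)| := by
      have h1 : 4 / π * (‖z‖ + 1) ≤ |(m : ℝ)| := le_trans hN habs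
      have h2 : π / 4 * (4 / π * (‖z‖ + 1)) ≤ π / 4 * |(m : ℝ)| := by
        apply mul_le_mul_of_nonneg_left h1 (by positivity)
      calc ‖z‖ + 1 = π / 4 * (4 / π * (‖z‖ + 1)) := by field_simp
        _ ≤ π / 4 * |(m : ℝ)| := h2
    have hcpos : (0:ℝ) < π / 4 * |(m : ℝ)| := lt_of_lt_of_le (by positivity) hc
    have hwnorm : π / 4 * |(m : ℝ)| ≤ ‖z + Octo.ofReal (π * m / 2)‖ := by
      have h3 : ‖Octo.ofReal (π * m / 2)‖ ≤ ‖z + Octo.ofReal (π * m / 2)‖ + ‖z‖ := by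
        calc ‖Octo.ofReal (π * m / 2)‖ = ‖(z + Octo.ofReal (π * m / 2)) - z‖ := by
              rw [add_sub_cancel_left]
          _ ≤ ‖z + Octo.ofReal (π * m / 2)‖ + ‖z‖ := norm_sub_le _ _
      rw [Octo.norm_ofReal] at h3
      have h4 : |π * m / 2| = π / 2 * |(m : ℝ)| := by
        rw [abs_div, abs_mul, abs_of_pos hpi]
        norm_num
        ring
      rw [h4] at h3
      nlinarith [abs_nonneg (m : ℝ)]
    have := Octo.norm_q0_le hcpos hwnorm
    rw [mul_pow] at this
    have hle : ((π / 4) ^ 7 * |(m : ℝ)| ^ 7)⁻¹ = (4 / π) ^ 7 * (|(m : ℝ)| ^ 7)⁻¹ := by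
      rw [mul_inv]
      congr 1
      rw [← inv_pow]
      congr 1
      field_simp
    rw [hle] at this
    exact hm.not_ge this
  -- even part
  have heven : (∑' x : {m : ℤ | Even m}, g x) = Octo.octCot z := by
    rw [← Octo.evenEquiv.tsum_eq (fun x : {m : ℤ | Even m} => g x), Octo.octCot]
    refine tsum_congr fun k => ?_
    show Octo.q0 (z + Octo.ofReal (π * ((2 * k : ℤ) : ℝ) / 2)) = _
    push_cast
    ring_nf
  -- odd part
  have hodd : (∑' x : ({m : ℤ | Even m}ᶜ : Set ℤ), g x) =
      Octo.octCot (z + Octo.ofReal (π / 2)) := by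
    rw [← Octo.oddEquiv.tsum_eq (fun x : ({m : ℤ | Even m}ᶜ : Set ℤ) => g x), Octo.octCot]
    refine tsum_congr fun k => ?_
    show Octo.q0 (z + Octo.ofReal (π * ((2 * k + 1 : ℤ) : ℝ) / 2)) = _
    rw [add_assoc, ← Octo.ofReal_add]
    push_cast
    ring_nf
  rw [hL, ← Summable.tsum_add_tsum_compl (s := {m : ℤ | Even m}) (hsum.subtype _) (hsum.subtype _),
    heven, hodd]
end
end

section
/- The octonionic tangent, defined by tan(z) := −cot(z + π/2), satisfies tan(z) = cot(z) − 128·cot(2z) for every z ∈ 𝕆 such that 2z + πm ≠ 0 for all m ∈ ℤ. -/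
noncomputable section
open Real MeasureTheory

namespace OctAux
open Octo (ee re conj ofReal q0)

lemma norm_ee0 : ‖ee 0‖ = 1 := by simp [ee, EuclideanSpace.norm_single]

lemma norm_ofReal (r : ℝ) : ‖ofReal r‖ = |r| := by
  simp [ofReal, norm_smul, norm_ee0]

lemma abs_coord_le (u : O8) : |u 0| ≤ ‖u‖ := by
  have h := abs_real_inner_le_norm (ee 0) u
  simpa [ee, EuclideanSpace.inner_single_left, norm_ee0] using h

lemma norm_conj_le (u : O8) : ‖conj u‖ ≤ 3 * ‖u‖ := by
  have h1 : ‖conj u‖ ≤ ‖(2 * u 0) • ee 0‖ + ‖u‖ := norm_sub_le _ _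
  have h2 : ‖(2 * u 0) • ee 0‖ = |2 * u 0| := by
    rw [norm_smul, norm_ee0, Real.norm_eq_abs, mul_one]
  have h3 := abs_coord_le u
  have : |2 * u 0| ≤ 2 * ‖u‖ := by rw [abs_mul, abs_two]; linarith
  linarith

lemma norm_q0_le (u : O8) : ‖q0 u‖ ≤ 3 / ‖u‖ ^ 7 := by
  rcases eq_or_ne u 0 with rfl | hu
  · simp [q0, conj]
  · have hpos : (0:ℝ) < ‖u‖ := norm_pos_iff.mpr hu
    have heq : ‖q0 u‖ = (‖u‖ ^ 8)⁻¹ * ‖conj u‖ := by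
      rw [q0, norm_smul, Real.norm_eq_abs, abs_of_nonneg (by positivity)]
    rw [heq]
    have h := norm_conj_le u
    calc (‖u‖ ^ 8)⁻¹ * ‖conj u‖ ≤ (‖u‖ ^ 8)⁻¹ * (3 * ‖u‖) := by
          gcongr
      _ = 3 / ‖u‖ ^ 7 := by field_simp

lemma smul_ofReal (c r : ℝ) : c • ofReal r = ofReal (c * r) := by
  simp [ofReal, smul_smul]

lemma ofReal_add (a b : ℝ) : ofReal (a + b) = ofReal a + ofReal b := by
  simp [ofReal, add_smul]

lemma conj_smul (c : ℝ) (u : O8) : conj (c • u) = c • conj u := by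
  simp only [conj, smul_sub, smul_smul]
  have : (c • u) 0 = c * u 0 := by simp
  rw [this]; ring_nf

lemma q0_two_smul (u : O8) : q0 ((2:ℝ) • u) = (128:ℝ)⁻¹ • q0 u := by
  rw [q0, q0, conj_smul, norm_smul, smul_smul, smul_smul]
  congr 1
  rw [mul_pow]
  simp only [Real.norm_eq_abs]
  rw [abs_two]
  rw [mul_inv]
  norm_num
  ring

def evenEquiv : ℤ ≃ {n : ℤ | Even n} where
  toFun k := ⟨2 * k, ⟨k, two_mul k⟩⟩
  invFun n := n.1 / 2
  left_inv k := by show 2 * k / 2 = k; omega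
  right_inv n := by
    obtain ⟨m, hm⟩ := n
    obtain ⟨r, hr⟩ := hm
    apply Subtype.ext
    simp only
    omega

def oddEquiv : ℤ ≃ ({n : ℤ | Even n}ᶜ : Set ℤ) where
  toFun k := ⟨2 * k + 1, by
    intro hc
    obtain ⟨r, hr⟩ := hc
    omega⟩
  invFun n := n.1 / 2
  left_inv k := by show (2 * k + 1) / 2 = k; omega
  right_inv n := by
    obtain ⟨m, hm⟩ := n
    have hm' : ¬ (m % 2 = 0) := fun h => hm (Int.even_iff.mpr h)
    apply Subtype.ext
    simp only
    omega

lemma hasSum_int_even_odd {f : ℤ → O8} {a b : O8}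
    (he : HasSum (fun k => f (2 * k)) a) (ho : HasSum (fun k => f (2 * k + 1)) b) :
    HasSum f (a + b) := by
  refine HasSum.add_isCompl (s := {n : ℤ | Even n}) isCompl_compl ?_ ?_
  · exact (Equiv.hasSum_iff evenEquiv).mp he
  · exact (Equiv.hasSum_iff oddEquiv).mp ho

lemma summable_F (z : O8) :
    Summable (fun m : ℤ => q0 (z + ofReal (π * m / 2))) := by
  apply summable_of_isBigO (Real.summable_abs_int_rpow (by norm_num : (1:ℝ) < 7))
  rw [Asymptotics.isBigO_iff]
  refine ⟨384, ?_⟩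
  rw [Filter.eventually_cofinite]
  set N : ℤ := ⌈‖z‖⌉ + 1 with hN
  apply Set.Finite.subset (Set.finite_Icc (-N) N)
  intro m hm
  simp only [Set.mem_setOf_eq, not_le] at hm
  simp only [Set.mem_Icc]
  by_contra hI
  apply absurd hm
  push_neg
  push_neg at hI
  have hNz : (N : ℝ) ≥ ‖z‖ + 1 := by
    rw [hN]; push_cast
    have := Int.le_ceil ‖z‖
    linarith
  have habs : ‖z‖ + 1 ≤ |(m:ℝ)| := by
    rcases le_or_gt (-N) m with h1 | h1
    · have h2 : N < m := hI h1
      have : (N : ℝ) < (m : ℝ) := by exact_mod_cast h2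
      have : (m:ℝ) ≤ |(m:ℝ)| := le_abs_self _
      linarith
    · have : (m : ℝ) < -(N : ℝ) := by exact_mod_cast h1
      have : -(m:ℝ) ≤ |(m:ℝ)| := neg_le_abs _
      linarith
  set u : O8 := z + ofReal (π * m / 2) with hu
  have hvnorm : ‖ofReal (π * m / 2)‖ = π * |(m:ℝ)| / 2 := by
    rw [norm_ofReal, abs_div, abs_mul, abs_of_pos pi_pos, abs_two]
  have hle : ‖ofReal (π * m / 2)‖ ≤ ‖u‖ + ‖z‖ := by
    have : ofReal (π * m / 2) = u - z := by rw [hu]; abel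
    rw [this]; exact norm_sub_le _ _
  have hpi := pi_gt_three
  have hmu : |(m:ℝ)| ≤ 2 * ‖u‖ := by
    have hh : 3 * |(m:ℝ)| ≤ π * |(m:ℝ)| :=
      mul_le_mul_of_nonneg_right hpi.le (abs_nonneg (m:ℝ))
    linarith
  have hm1 : (1:ℝ) ≤ |(m:ℝ)| := by have := norm_nonneg z; linarith
  have hupos : (0:ℝ) < ‖u‖ := by nlinarith
  have hq := norm_q0_le u
  have hrpow : |(m:ℝ)| ^ (-7:ℝ) = (|(m:ℝ)| ^ (7:ℕ))⁻¹ := by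
    rw [show (-7:ℝ) = -(((7:ℕ)):ℝ) by norm_num, Real.rpow_neg (abs_nonneg _),
      Real.rpow_natCast]
  have hm7 : |(m:ℝ)| ^ (7:ℕ) ≤ (2 * ‖u‖) ^ (7:ℕ) := by
    exact pow_le_pow_left₀ (abs_nonneg _) hmu 7
  have h2u : (2 * ‖u‖) ^ (7:ℕ) = 128 * ‖u‖ ^ (7:ℕ) := by ring
  have hm7pos : (0:ℝ) < |(m:ℝ)| ^ (7:ℕ) := by positivity
  have key : 3 / ‖u‖ ^ 7 ≤ 384 / |(m:ℝ)| ^ (7:ℕ) := by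
    rw [div_le_div_iff₀ (by positivity) hm7pos]
    nlinarith
  rw [Real.norm_eq_abs, hrpow, abs_of_nonneg (by positivity)]
  calc ‖q0 u‖ ≤ 3 / ‖u‖ ^ 7 := hq
    _ ≤ 384 / |(m:ℝ)| ^ (7:ℕ) := key
    _ = 384 * (|(m:ℝ)| ^ (7:ℕ))⁻¹ := div_eq_mul_inv _ _

end OctAux

/-- the octonionic tangent `tan z = - cot (z + π/2)` satisfies
`tan z = cot z - 128 cot (2z)`. -/
theorem octTan_eq_octCot_sub (z : O8) (h : ∀ m : ℤ, (2 : ℝ) • z + Octo.ofReal (π * m) ≠ 0) :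
    Octo.octTan z = Octo.octCot z - (128 : ℝ) • Octo.octCot ((2 : ℝ) • z) := by
  set F : ℤ → O8 := fun m => Octo.q0 (z + Octo.ofReal (π * m / 2)) with hF
  have hs : Summable F := OctAux.summable_F z
  have hse : Summable (fun k : ℤ => F (2 * k)) :=
    hs.comp_injective (fun a b hab => by omega)
  have hso : Summable (fun k : ℤ => F (2 * k + 1)) :=
    hs.comp_injective (fun a b hab => by omega)
  have heq_e : Octo.octCot z = ∑' k : ℤ, F (2 * k) := by
    rw [Octo.octCot]
    apply tsum_congr
    intro k
    show Octo.q0 (z + Octo.ofReal (π * (k:ℝ))) = Octo.q0 (z + Octo.ofReal (π * ((2*k : ℤ):ℝ) / 2))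
    rw [show π * ((2*k : ℤ):ℝ) / 2 = π * (k:ℝ) by push_cast; ring]
  have heq_o : Octo.octCot (z + Octo.ofReal (π / 2)) = ∑' k : ℤ, F (2 * k + 1) := by
    rw [Octo.octCot]
    apply tsum_congr
    intro k
    show Octo.q0 (z + Octo.ofReal (π/2) + Octo.ofReal (π * (k:ℝ)))
        = Octo.q0 (z + Octo.ofReal (π * ((2*k+1 : ℤ):ℝ) / 2))
    rw [add_assoc, ← OctAux.ofReal_add,
      show π/2 + π * (k:ℝ) = π * ((2*k+1 : ℤ):ℝ) / 2 by push_cast; ring]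
  have htot : HasSum F (Octo.octCot z + Octo.octCot (z + Octo.ofReal (π / 2))) := by
    rw [heq_e, heq_o]
    exact OctAux.hasSum_int_even_odd hse.hasSum hso.hasSum
  have hT : ∑' m : ℤ, F m = Octo.octCot z + Octo.octCot (z + Octo.ofReal (π / 2)) :=
    htot.tsum_eq
  have h128 : (128:ℝ) • Octo.octCot ((2:ℝ) • z) = ∑' m : ℤ, F m := by
    rw [Octo.octCot]
    have hterm : ∀ m : ℤ, Octo.q0 ((2:ℝ) • z + Octo.ofReal (π * (m:ℝ)))
        = (128:ℝ)⁻¹ • F m := by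
      intro m
      have harg : (2:ℝ) • (z + Octo.ofReal (π * (m:ℝ) / 2))
          = (2:ℝ) • z + Octo.ofReal (π * (m:ℝ)) := by
        rw [smul_add, OctAux.smul_ofReal, show (2:ℝ) * (π * (m:ℝ) / 2) = π * (m:ℝ) by ring]
      rw [← harg, OctAux.q0_two_smul]
    rw [tsum_congr hterm, tsum_const_smul'' ((128:ℝ)⁻¹), smul_smul]
    norm_num
  rw [Octo.octTan, h128, hT]
  abel
end
end

section
/- The octonionic Cauchy kernel q₀: 𝕆 \ {0} → 𝕆, q₀(z) = z̄/|z|⁸ = (x0 − x1e1 − … − x7e7)/(x0² + x1² + … + x7²)⁴, is both left and right 𝕆-regular on 𝕆 \ {0}, i.e. 𝒟q₀ = 0 and q₀𝒟 = 0 there. -/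
noncomputable section
open Real MeasureTheory

namespace Octo

theorem mul_def (x y : O8) : x * y = ∑ i : Fin 8, ∑ j : Fin 8, (x i * y j) • mulTable i j := rfl

@[simp] theorem mulT_0_0 : mulTable 0 0 = ee 0 := rfl
@[simp] theorem mulT_0_1 : mulTable 0 1 = ee 1 := rfl
@[simp] theorem mulT_0_2 : mulTable 0 2 = ee 2 := rfl
@[simp] theorem mulT_0_3 : mulTable 0 3 = ee 3 := rfl
@[simp] theorem mulT_0_4 : mulTable 0 4 = ee 4 := rfl
@[simp] theorem mulT_0_5 : mulTable 0 5 = ee 5 := rfl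
@[simp] theorem mulT_0_6 : mulTable 0 6 = ee 6 := rfl
@[simp] theorem mulT_0_7 : mulTable 0 7 = ee 7 := rfl
@[simp] theorem mulT_1_0 : mulTable 1 0 = ee 1 := rfl
@[simp] theorem mulT_1_1 : mulTable 1 1 = -ee 0 := rfl
@[simp] theorem mulT_1_2 : mulTable 1 2 = ee 4 := rfl
@[simp] theorem mulT_1_3 : mulTable 1 3 = ee 5 := rfl
@[simp] theorem mulT_1_4 : mulTable 1 4 = -ee 2 := rfl
@[simp] theorem mulT_1_5 : mulTable 1 5 = -ee 3 := rfl
@[simp] theorem mulT_1_6 : mulTable 1 6 = -ee 7 := rfl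
@[simp] theorem mulT_1_7 : mulTable 1 7 = ee 6 := rfl
@[simp] theorem mulT_2_0 : mulTable 2 0 = ee 2 := rfl
@[simp] theorem mulT_2_1 : mulTable 2 1 = -ee 4 := rfl
@[simp] theorem mulT_2_2 : mulTable 2 2 = -ee 0 := rfl
@[simp] theorem mulT_2_3 : mulTable 2 3 = ee 6 := rfl
@[simp] theorem mulT_2_4 : mulTable 2 4 = ee 1 := rfl
@[simp] theorem mulT_2_5 : mulTable 2 5 = ee 7 := rfl
@[simp] theorem mulT_2_6 : mulTable 2 6 = -ee 3 := rfl
@[simp] theorem mulT_2_7 : mulTable 2 7 = -ee 5 := rfl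
@[simp] theorem mulT_3_0 : mulTable 3 0 = ee 3 := rfl
@[simp] theorem mulT_3_1 : mulTable 3 1 = -ee 5 := rfl
@[simp] theorem mulT_3_2 : mulTable 3 2 = -ee 6 := rfl
@[simp] theorem mulT_3_3 : mulTable 3 3 = -ee 0 := rfl
@[simp] theorem mulT_3_4 : mulTable 3 4 = -ee 7 := rfl
@[simp] theorem mulT_3_5 : mulTable 3 5 = ee 1 := rfl
@[simp] theorem mulT_3_6 : mulTable 3 6 = ee 2 := rfl
@[simp] theorem mulT_3_7 : mulTable 3 7 = ee 4 := rfl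
@[simp] theorem mulT_4_0 : mulTable 4 0 = ee 4 := rfl
@[simp] theorem mulT_4_1 : mulTable 4 1 = ee 2 := rfl
@[simp] theorem mulT_4_2 : mulTable 4 2 = -ee 1 := rfl
@[simp] theorem mulT_4_3 : mulTable 4 3 = ee 7 := rfl
@[simp] theorem mulT_4_4 : mulTable 4 4 = -ee 0 := rfl
@[simp] theorem mulT_4_5 : mulTable 4 5 = -ee 6 := rfl
@[simp] theorem mulT_4_6 : mulTable 4 6 = ee 5 := rfl
@[simp] theorem mulT_4_7 : mulTable 4 7 = -ee 3 := rfl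
@[simp] theorem mulT_5_0 : mulTable 5 0 = ee 5 := rfl
@[simp] theorem mulT_5_1 : mulTable 5 1 = ee 3 := rfl
@[simp] theorem mulT_5_2 : mulTable 5 2 = -ee 7 := rfl
@[simp] theorem mulT_5_3 : mulTable 5 3 = -ee 1 := rfl
@[simp] theorem mulT_5_4 : mulTable 5 4 = ee 6 := rfl
@[simp] theorem mulT_5_5 : mulTable 5 5 = -ee 0 := rfl
@[simp] theorem mulT_5_6 : mulTable 5 6 = -ee 4 := rfl
@[simp] theorem mulT_5_7 : mulTable 5 7 = ee 2 := rfl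
@[simp] theorem mulT_6_0 : mulTable 6 0 = ee 6 := rfl
@[simp] theorem mulT_6_1 : mulTable 6 1 = ee 7 := rfl
@[simp] theorem mulT_6_2 : mulTable 6 2 = ee 3 := rfl
@[simp] theorem mulT_6_3 : mulTable 6 3 = -ee 2 := rfl
@[simp] theorem mulT_6_4 : mulTable 6 4 = -ee 5 := rfl
@[simp] theorem mulT_6_5 : mulTable 6 5 = ee 4 := rfl
@[simp] theorem mulT_6_6 : mulTable 6 6 = -ee 0 := rfl
@[simp] theorem mulT_6_7 : mulTable 6 7 = -ee 1 := rfl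
@[simp] theorem mulT_7_0 : mulTable 7 0 = ee 7 := rfl
@[simp] theorem mulT_7_1 : mulTable 7 1 = -ee 6 := rfl
@[simp] theorem mulT_7_2 : mulTable 7 2 = ee 5 := rfl
@[simp] theorem mulT_7_3 : mulTable 7 3 = -ee 4 := rfl
@[simp] theorem mulT_7_4 : mulTable 7 4 = ee 3 := rfl
@[simp] theorem mulT_7_5 : mulTable 7 5 = -ee 2 := rfl
@[simp] theorem mulT_7_6 : mulTable 7 6 = ee 1 := rfl
@[simp] theorem mulT_7_7 : mulTable 7 7 = -ee 0 := rfl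


@[simp] theorem conj_app0 (z : O8) : conj z 0 = z 0 := by
  simp [conj, ee, EuclideanSpace.single_apply]; ring
@[simp] theorem conj_app1 (z : O8) : conj z 1 = - z 1 := by
  simp [conj, ee, EuclideanSpace.single_apply]
@[simp] theorem conj_app2 (z : O8) : conj z 2 = - z 2 := by
  simp [conj, ee, EuclideanSpace.single_apply]
@[simp] theorem conj_app3 (z : O8) : conj z 3 = - z 3 := by
  simp [conj, ee, EuclideanSpace.single_apply]
@[simp] theorem conj_app4 (z : O8) : conj z 4 = - z 4 := by
  simp [conj, ee, EuclideanSpace.single_apply]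
@[simp] theorem conj_app5 (z : O8) : conj z 5 = - z 5 := by
  simp [conj, ee, EuclideanSpace.single_apply]
@[simp] theorem conj_app6 (z : O8) : conj z 6 = - z 6 := by
  simp [conj, ee, EuclideanSpace.single_apply]
@[simp] theorem conj_app7 (z : O8) : conj z 7 = - z 7 := by
  simp [conj, ee, EuclideanSpace.single_apply]

set_option maxHeartbeats 1000000 in
theorem mul_conj (z : O8) : z * conj z = (∑ i : Fin 8, z i ^ 2) • ee 0 := by
  rw [mul_def]
  simp only [Fin.sum_univ_eight, mulT_0_0, mulT_0_1, mulT_0_2, mulT_0_3, mulT_0_4, mulT_0_5,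
    mulT_0_6, mulT_0_7, mulT_1_0, mulT_1_1, mulT_1_2, mulT_1_3, mulT_1_4, mulT_1_5, mulT_1_6,
    mulT_1_7, mulT_2_0, mulT_2_1, mulT_2_2, mulT_2_3, mulT_2_4, mulT_2_5, mulT_2_6, mulT_2_7,
    mulT_3_0, mulT_3_1, mulT_3_2, mulT_3_3, mulT_3_4, mulT_3_5, mulT_3_6, mulT_3_7, mulT_4_0,
    mulT_4_1, mulT_4_2, mulT_4_3, mulT_4_4, mulT_4_5, mulT_4_6, mulT_4_7, mulT_5_0, mulT_5_1,
    mulT_5_2, mulT_5_3, mulT_5_4, mulT_5_5, mulT_5_6, mulT_5_7, mulT_6_0, mulT_6_1, mulT_6_2,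
    mulT_6_3, mulT_6_4, mulT_6_5, mulT_6_6, mulT_6_7, mulT_7_0, mulT_7_1, mulT_7_2, mulT_7_3,
    mulT_7_4, mulT_7_5, mulT_7_6, mulT_7_7, conj_app0, conj_app1, conj_app2, conj_app3,
    conj_app4, conj_app5, conj_app6, conj_app7]
  module

set_option maxHeartbeats 1000000 in
theorem conj_mul (z : O8) : conj z * z = (∑ i : Fin 8, z i ^ 2) • ee 0 := by
  rw [mul_def]
  simp only [Fin.sum_univ_eight, mulT_0_0, mulT_0_1, mulT_0_2, mulT_0_3, mulT_0_4, mulT_0_5,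
    mulT_0_6, mulT_0_7, mulT_1_0, mulT_1_1, mulT_1_2, mulT_1_3, mulT_1_4, mulT_1_5, mulT_1_6,
    mulT_1_7, mulT_2_0, mulT_2_1, mulT_2_2, mulT_2_3, mulT_2_4, mulT_2_5, mulT_2_6, mulT_2_7,
    mulT_3_0, mulT_3_1, mulT_3_2, mulT_3_3, mulT_3_4, mulT_3_5, mulT_3_6, mulT_3_7, mulT_4_0,
    mulT_4_1, mulT_4_2, mulT_4_3, mulT_4_4, mulT_4_5, mulT_4_6, mulT_4_7, mulT_5_0, mulT_5_1,
    mulT_5_2, mulT_5_3, mulT_5_4, mulT_5_5, mulT_5_6, mulT_5_7, mulT_6_0, mulT_6_1, mulT_6_2,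
    mulT_6_3, mulT_6_4, mulT_6_5, mulT_6_6, mulT_6_7, mulT_7_0, mulT_7_1, mulT_7_2, mulT_7_3,
    mulT_7_4, mulT_7_5, mulT_7_6, mulT_7_7, conj_app0, conj_app1, conj_app2, conj_app3,
    conj_app4, conj_app5, conj_app6, conj_app7]
  module

theorem ee_mul_ee (a b : Fin 8) : ee a * ee b = mulTable a b := by
  simp only [mul_def, ee, EuclideanSpace.single_apply, boole_mul, ite_smul, one_smul, zero_smul]
  rw [Finset.sum_eq_single a]
  · rw [Finset.sum_eq_single b]
    · simp
    · intro x _ hx; simp [hx]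
    · simp
  · intro x _ hx; simp [hx]
  · simp

theorem ee_mul (k : Fin 8) (w : O8) : ee k * w = ∑ j : Fin 8, w j • mulTable k j := by
  rw [mul_def, Finset.sum_eq_single k]
  · simp [ee, EuclideanSpace.single_apply]
  · intro i _ hik; simp [ee, EuclideanSpace.single_apply, hik]
  · simp

theorem mul_ee (k : Fin 8) (x : O8) : x * ee k = ∑ i : Fin 8, x i • mulTable i k := by
  rw [mul_def]
  refine Finset.sum_congr rfl fun i _ => ?_
  rw [Finset.sum_eq_single k]
  · simp [ee, EuclideanSpace.single_apply]
  · intro j _ hjk; simp [ee, EuclideanSpace.single_apply, hjk]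
  · simp

theorem mulTable_zero_left (j : Fin 8) : mulTable 0 j = ee j := by fin_cases j <;> rfl
theorem mulTable_zero_right (i : Fin 8) : mulTable i 0 = ee i := by fin_cases i <;> rfl

theorem sum_smul_ee (w : O8) : ∑ j : Fin 8, w j • ee j = w := by
  ext k
  have h : (∑ j : Fin 8, w j • ee j) k = ∑ j : Fin 8, (w j • ee j) k :=
    by rw [WithLp.ofLp_sum]; exact Finset.sum_apply k Finset.univ _
  rw [h]
  simp [ee, EuclideanSpace.single_apply, Finset.sum_ite_eq]

theorem one_mul' (w : O8) : ee 0 * w = w := by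
  rw [ee_mul]; simp_rw [mulTable_zero_left]; exact sum_smul_ee w

theorem mul_one' (w : O8) : w * ee 0 = w := by
  rw [mul_ee]; simp_rw [mulTable_zero_right]; exact sum_smul_ee w

theorem mul_smul_right (r : ℝ) (x y : O8) : x * (r • y) = r • (x * y) := by
  simp only [mul_def, PiLp.smul_apply, smul_eq_mul, Finset.smul_sum, smul_smul]
  simp_rw [mul_left_comm]

theorem smul_mul_left (r : ℝ) (x y : O8) : (r • x) * y = r • (x * y) := by
  simp only [mul_def, PiLp.smul_apply, smul_eq_mul, Finset.smul_sum, smul_smul]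
  simp_rw [mul_assoc]

theorem mul_add' (x y y' : O8) : x * (y + y') = x * y + x * y' := by
  simp only [mul_def, PiLp.add_apply, mul_add, add_smul, Finset.sum_add_distrib]

theorem add_mul' (x x' y : O8) : (x + x') * y = x * y + x' * y := by
  simp only [mul_def, PiLp.add_apply, add_mul, add_smul, Finset.sum_add_distrib]

theorem mul_neg' (x y : O8) : x * (-y) = -(x * y) := by
  simp only [mul_def, PiLp.neg_apply, mul_neg, neg_smul, Finset.sum_neg_distrib]

theorem neg_mul' (x y : O8) : (-x) * y = -(x * y) := by
  simp only [mul_def, PiLp.neg_apply, neg_mul, neg_smul, Finset.sum_neg_distrib]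

theorem mul_eq_sum_left (x w : O8) : x * w = ∑ k : Fin 8, x k • (ee k * w) := by
  simp_rw [ee_mul, Finset.smul_sum, smul_smul]
  rw [mul_def]

theorem mul_eq_sum_right (x w : O8) : x * w = ∑ k : Fin 8, w k • (x * ee k) := by
  simp_rw [mul_ee, Finset.smul_sum, smul_smul]
  rw [mul_def, Finset.sum_comm]
  refine Finset.sum_congr rfl fun j _ => Finset.sum_congr rfl fun i _ => ?_
  rw [mul_comm (x i)]

theorem conj_ee0 : conj (ee 0) = ee 0 := by
  ext k
  by_cases h : k = 0
  · simp [conj, ee, EuclideanSpace.single_apply, h]; norm_num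
  · simp [conj, ee, EuclideanSpace.single_apply, h]

theorem conj_ee_succ (i : Fin 7) : conj (ee i.succ) = -(ee i.succ) := by
  have h0 : (ee i.succ) 0 = 0 := by
    simp [ee, EuclideanSpace.single_apply, (Fin.succ_ne_zero i).symm]
  simp [conj, h0]

theorem ee_succ_sq (i : Fin 7) : ee i.succ * ee i.succ = -ee 0 := by
  rw [ee_mul_ee]
  fin_cases i <;> rfl

theorem norm_pow_eight (y : O8) : ‖y‖ ^ 8 = (∑ i : Fin 8, y i ^ 2) ^ 4 := by
  have h2 : ‖y‖ ^ 2 = ∑ i : Fin 8, y i ^ 2 := by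
    rw [EuclideanSpace.norm_eq, Real.sq_sqrt (by positivity)]
    simp [Real.norm_eq_abs, sq_abs]
  calc ‖y‖ ^ 8 = (‖y‖ ^ 2) ^ 4 := by ring
  _ = _ := by rw [h2]


/-- Conjugation as a continuous linear map. -/
def conjCLM : O8 →L[ℝ] O8 :=
  (2 : ℝ) • ((EuclideanSpace.proj (0 : Fin 8)).smulRight (ee 0)) - ContinuousLinearMap.id ℝ O8

@[simp] theorem proj_apply' (i : Fin 8) (y : O8) : (EuclideanSpace.proj (𝕜 := ℝ) i) y = y i := rfl

theorem conj_eq_clm (y : O8) : conj y = conjCLM y := by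
  simp [conj, conjCLM, ContinuousLinearMap.smul_apply, ContinuousLinearMap.sub_apply,
    ContinuousLinearMap.smulRight_apply, ContinuousLinearMap.id_apply,
    proj_apply', smul_smul]

theorem regular_aux (z : O8) (hz : z ≠ 0) : Dl q0 z = 0 ∧ Dr q0 z = 0 := by
  classical
  have hNpos : 0 < ∑ i : Fin 8, z i ^ 2 := by
    obtain ⟨i, hi⟩ : ∃ i, z i ≠ 0 := by
      by_contra h; push_neg at h; exact hz (by ext i; simpa using h i)
    calc (0:ℝ) < z i ^ 2 := by positivity
    _ ≤ ∑ i : Fin 8, z i ^ 2 :=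
      Finset.single_le_sum (fun j _ => sq_nonneg (z j)) (Finset.mem_univ i)
  set Nf : O8 → ℝ := fun y => ∑ i : Fin 8, y i ^ 2 with hNf
  have hN0 : Nf z ≠ 0 := ne_of_gt hNpos
  have hq0 : q0 = fun y => ((Nf y) ^ 4)⁻¹ • conjCLM y := by
    funext y
    rw [q0, norm_pow_eight, conj_eq_clm]
  set L : O8 →L[ℝ] ℝ := ∑ i : Fin 8, (2 * z i) • EuclideanSpace.proj i with hL
  have hNfd : HasFDerivAt Nf L z := by
    apply HasFDerivAt.fun_sum
    intro i _
    have h := (hasDerivAt_pow 2 (z i)).comp_hasFDerivAt z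
      (EuclideanSpace.proj (𝕜 := ℝ) i).hasFDerivAt
    simp [Function.comp] at h
    exact h
  set t : ℝ := -(4 * Nf z ^ 3) / (Nf z ^ 4) ^ 2 with ht
  set s : ℝ := (Nf z ^ 4)⁻¹ with hs
  have hg : HasDerivAt (fun u : ℝ => (u ^ 4)⁻¹) t (Nf z) := by
    have h := (hasDerivAt_pow 4 (Nf z)).inv (pow_ne_zero 4 hN0)
    exact h
  have hc : HasFDerivAt (fun y : O8 => ((Nf y) ^ 4)⁻¹) (t • L) z := by
    have h := hg.comp_hasFDerivAt z hNfd
    exact h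
  have hq : HasFDerivAt q0 (s • conjCLM + (t • L).smulRight (conjCLM z)) z := by
    rw [hq0]
    exact hc.smul conjCLM.hasFDerivAt
  have hfd : fderiv ℝ q0 z = s • conjCLM + (t • L).smulRight (conjCLM z) := hq.fderiv
  have hLk : ∀ k : Fin 8, L (ee k) = 2 * z k := by
    intro k
    simp [hL, ContinuousLinearMap.sum_apply, ContinuousLinearMap.smul_apply,
      proj_apply', ee, EuclideanSpace.single_apply, mul_ite, mul_one, mul_zero,
      Finset.sum_ite_eq]
  have hDk : ∀ k : Fin 8, fderiv ℝ q0 z (ee k) = s • conj (ee k) + (t * (2 * z k)) • conj z := by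
    intro k
    rw [hfd]
    rw [ContinuousLinearMap.add_apply, ContinuousLinearMap.smul_apply,
      ContinuousLinearMap.smulRight_apply, ContinuousLinearMap.smul_apply, hLk,
      ← conj_eq_clm, ← conj_eq_clm]
    rfl
  have hrel : t * 2 * Nf z + 8 * s = 0 := by
    rw [ht, hs]
    field_simp
    ring
  constructor
  · -- left regularity
    rw [Dl]
    simp only [hDk]
    have h1 : ∀ i : Fin 7, ee i.succ * (s • conj (ee i.succ) + (t * (2 * z i.succ)) • conj z)
        = s • ee 0 + (t * (2 * z i.succ)) • (ee i.succ * conj z) := by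
      intro i
      rw [mul_add', mul_smul_right, mul_smul_right, conj_ee_succ, mul_neg', ee_succ_sq, neg_neg]
    simp only [h1]
    rw [Finset.sum_add_distrib, Finset.sum_const, Finset.card_univ, Fintype.card_fin, conj_ee0]
    have h2 : (t * (2 * z 0)) • conj z = (t * (2 * z 0)) • (ee 0 * conj z) := by rw [one_mul']
    rw [h2, add_add_add_comm]
    rw [← Fin.sum_univ_succ (f := fun k : Fin 8 => (t * (2 * z k)) • (ee k * conj z))]
    have h4 : ∑ k : Fin 8, (t * (2 * z k)) • (ee k * conj z) = (t * 2 * Nf z) • ee 0 := by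
      have h5 : ∀ k : Fin 8, (t * (2 * z k)) • (ee k * conj z)
          = (t * 2) • (z k • (ee k * conj z)) := by
        intro k; rw [smul_smul]; ring_nf
      simp only [h5]
      rw [← Finset.smul_sum, ← mul_eq_sum_left, mul_conj, smul_smul]
    rw [h4]
    match_scalars
    linear_combination hrel
  · -- right regularity
    rw [Dr]
    simp only [hDk]
    have h1 : ∀ i : Fin 7, (s • conj (ee i.succ) + (t * (2 * z i.succ)) • conj z) * ee i.succ
        = s • ee 0 + (t * (2 * z i.succ)) • (conj z * ee i.succ) := by
      intro i
      rw [add_mul', smul_mul_left, smul_mul_left, conj_ee_succ, neg_mul', ee_succ_sq, neg_neg]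
    simp only [h1]
    rw [Finset.sum_add_distrib, Finset.sum_const, Finset.card_univ, Fintype.card_fin, conj_ee0]
    have h2 : (t * (2 * z 0)) • conj z = (t * (2 * z 0)) • (conj z * ee 0) := by rw [mul_one']
    rw [h2, add_add_add_comm]
    rw [← Fin.sum_univ_succ (f := fun k : Fin 8 => (t * (2 * z k)) • (conj z * ee k))]
    have h4 : ∑ k : Fin 8, (t * (2 * z k)) • (conj z * ee k) = (t * 2 * Nf z) • ee 0 := by
      have h5 : ∀ k : Fin 8, (t * (2 * z k)) • (conj z * ee k)
          = (t * 2) • (z k • (conj z * ee k)) := by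
        intro k; rw [smul_smul]; ring_nf
      simp only [h5]
      rw [← Finset.smul_sum, ← mul_eq_sum_right, conj_mul, smul_smul]
    rw [h4]
    match_scalars
    linear_combination hrel

end Octo

/-- the octonionic Cauchy kernel `q₀(z) = z̄/|z|⁸` (with
`|z|⁸ = (x₀²+⋯+x₇²)⁴`) is both left and right 𝕆-regular on `𝕆 \ {0}`. -/
theorem q0_left_and_right_regular (z : O8) (hz : z ≠ 0) :
    (‖z‖ ^ 8 = (∑ i : Fin 8, z i ^ 2) ^ 4) ∧
    Octo.Dl Octo.q0 z = 0 ∧ Octo.Dr Octo.q0 z = 0 := by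
  exact ⟨Octo.norm_pow_eight z, Octo.regular_aux z hz⟩
end
end
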